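/- Let q ≠ 0 and r be real numbers. For all nonnegative integers n and k with k ≤ n, W(n,k) = (1/(q^k k!)) ∑_{j=0}^k (−1)^{k−j} C(k,j) (r + jq)^n, where C(k,j) denotes the binomial coefficient. -/

import Mathlib

/-- The falling factorial `(x)_k = x(x-1)⋯(x-k+1)`. -/
noncomputable def fallFac (x : ℝ) (k : ℕ) : ℝ := ∏ i ∈ Finset.range k, (x - i)

lemma fallFac_natCast (j i : ℕ) : fallFac (j : ℝ) i = (j.descFactorial i : ℝ) := by
  induction i with
  | zero => simp [fallFac]
  | succ i ih =>
    rw [fallFac, Finset.prod_range_succ, ← fallFac, ih, Nat.descFactorial_succ]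
    rcases le_or_gt i j with h | h
    · push_cast [h]
      ring
    · rw [Nat.descFactorial_eq_zero_iff_lt.2 h, Nat.sub_eq_zero_of_le h.le]
      simp

lemma alt_sum (m : ℕ) :
    ∑ t ∈ Finset.range (m + 1), (-1 : ℝ) ^ (m - t) * (m.choose t : ℝ) =
      if m = 0 then 1 else 0 := by
  have hInt := Int.alternating_sum_range_choose (n := m)
  have hR : ∑ t ∈ Finset.range (m + 1), (-1 : ℝ) ^ t * (m.choose t : ℝ) =
      if m = 0 then 1 else 0 := by
    exact_mod_cast congrArg (Int.cast : ℤ → ℝ) hInt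
  have : ∀ t ∈ Finset.range (m + 1), (-1 : ℝ) ^ (m - t) * (m.choose t : ℝ) =
      (-1 : ℝ) ^ m * ((-1 : ℝ) ^ t * (m.choose t : ℝ)) := by
    intro t ht
    rw [Finset.mem_range] at ht
    have h : m - t + t = m := Nat.sub_add_cancel (by omega)
    have h1 : (-1 : ℝ) ^ (m - t) * (-1 : ℝ) ^ t = (-1 : ℝ) ^ m := by
      rw [← pow_add, h]
    have h2 : (-1 : ℝ) ^ t * (-1 : ℝ) ^ t = 1 := by
      rw [← pow_add, ← two_mul, pow_mul]; norm_num
    linear_combination ((-1:ℝ)^t * (m.choose t : ℝ)) * h1 - ((-1:ℝ)^(m-t) * (m.choose t : ℝ)) * h2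
  rw [Finset.sum_congr rfl this, ← Finset.mul_sum, hR]
  rcases eq_or_ne m 0 with hm | hm <;> simp [hm]

lemma key_sum (k i : ℕ) :
    ∑ j ∈ Finset.range (k + 1), (-1 : ℝ) ^ (k - j) * (k.choose j : ℝ) * (j.choose i : ℝ) =
      if i = k then 1 else 0 := by
  rcases lt_or_ge k i with h | h
  · rw [if_neg (by omega)]
    apply Finset.sum_eq_zero
    intro j hj
    rw [Finset.mem_range] at hj
    rw [Nat.choose_eq_zero_of_lt (show j < i by omega)]
    simp
  · -- i ≤ k; terms with j < i vanish
    rw [Finset.range_eq_Ico, ← Finset.sum_Ico_consecutive _ (Nat.zero_le i) (by omega)]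
    have h0 : ∑ j ∈ Finset.Ico 0 i, (-1 : ℝ) ^ (k - j) * (k.choose j : ℝ) * (j.choose i : ℝ)
        = 0 := by
      apply Finset.sum_eq_zero
      intro j hj
      rw [Finset.mem_Ico] at hj
      rw [Nat.choose_eq_zero_of_lt (show j < i by omega)]
      simp
    rw [h0, zero_add, Finset.sum_Ico_eq_sum_range]
    have hrange : k + 1 - i = (k - i) + 1 := by omega
    rw [hrange]
    have hterm : ∀ t ∈ Finset.range ((k - i) + 1),
        (-1 : ℝ) ^ (k - (i + t)) * (k.choose (i + t) : ℝ) * ((i + t).choose i : ℝ)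
          = (k.choose i : ℝ) * ((-1 : ℝ) ^ ((k - i) - t) * ((k - i).choose t : ℝ)) := by
      intro t ht
      rw [Finset.mem_range] at ht
      have h1 : i + t ≤ k := by omega
      have h2 : i ≤ i + t := Nat.le_add_right i t
      have hcc : k.choose (i + t) * (i + t).choose i = k.choose i * (k - i).choose (i + t - i) :=
        Nat.choose_mul h2
      rw [Nat.add_sub_cancel_left] at hcc
      have hcast : (k.choose (i + t) : ℝ) * ((i + t).choose i : ℝ)
          = (k.choose i : ℝ) * ((k - i).choose t : ℝ) := by exact_mod_cast hcc
      have hexp : k - (i + t) = (k - i) - t := by omega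
      rw [hexp, mul_assoc, hcast]
      ring
    rw [Finset.sum_congr rfl hterm, ← Finset.mul_sum, alt_sum (k - i)]
    rcases eq_or_ne i k with hik | hik
    · subst hik; simp
    · have : k - i ≠ 0 := by omega
      simp [this, hik]

/-- the explicit formula for the `r`-Whitney numbers of the second kind:
`W(n,k) = (1/(q^k k!)) ∑_{j=0}^k (−1)^{k−j} C(k,j) (r + jq)^n`. -/
theorem whitneySecond_explicit (q r : ℝ) (hq : q ≠ 0)
    (W : ℕ → ℕ → ℝ)
    (hW0 : ∀ n k, n < k → W n k = 0)
    (hW : ∀ n : ℕ, ∀ x : ℝ, (q * x + r) ^ n =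
      ∑ k ∈ Finset.range (n + 1), q ^ k * W n k * fallFac x k)
    (n k : ℕ) (hkn : k ≤ n) :
    W n k = (1 / (q ^ k * (k.factorial : ℝ))) *
      ∑ j ∈ Finset.range (k + 1),
        (-1 : ℝ) ^ (k - j) * (k.choose j : ℝ) * (r + (j : ℝ) * q) ^ n := by
  have hS : ∑ j ∈ Finset.range (k + 1),
      (-1 : ℝ) ^ (k - j) * (k.choose j : ℝ) * (r + (j : ℝ) * q) ^ n
        = q ^ k * W n k * (k.factorial : ℝ) := by
    have hpt : ∀ j : ℕ, (r + (j : ℝ) * q) ^ n =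
        ∑ i ∈ Finset.range (n + 1), q ^ i * W n i * fallFac (j : ℝ) i := by
      intro j
      rw [show r + (j : ℝ) * q = q * (j : ℝ) + r by ring]
      exact hW n j
    calc
      ∑ j ∈ Finset.range (k + 1),
          (-1 : ℝ) ^ (k - j) * (k.choose j : ℝ) * (r + (j : ℝ) * q) ^ n
        = ∑ j ∈ Finset.range (k + 1), ∑ i ∈ Finset.range (n + 1),
            (-1 : ℝ) ^ (k - j) * (k.choose j : ℝ) * (q ^ i * W n i * fallFac (j : ℝ) i) := by
          refine Finset.sum_congr rfl fun j _ => ?_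
          rw [hpt j, Finset.mul_sum]
      _ = ∑ i ∈ Finset.range (n + 1), q ^ i * W n i *
            ∑ j ∈ Finset.range (k + 1),
              (-1 : ℝ) ^ (k - j) * (k.choose j : ℝ) * fallFac (j : ℝ) i := by
          rw [Finset.sum_comm]
          refine Finset.sum_congr rfl fun i _ => ?_
          rw [Finset.mul_sum]
          refine Finset.sum_congr rfl fun j _ => ?_
          ring
      _ = ∑ i ∈ Finset.range (n + 1), q ^ i * W n i *
            ((i.factorial : ℝ) * if i = k then (1 : ℝ) else 0) := by
          refine Finset.sum_congr rfl fun i _ => ?_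
          congr 1
          rw [← key_sum k i, Finset.mul_sum]
          refine Finset.sum_congr rfl fun j _ => ?_
          rw [fallFac_natCast, Nat.descFactorial_eq_factorial_mul_choose]
          push_cast
          ring
      _ = q ^ k * W n k * (k.factorial : ℝ) := by
          rw [Finset.sum_congr rfl (fun i _ => by
            rw [mul_ite, mul_one, mul_zero, mul_ite, mul_zero])]
          rw [Finset.sum_ite_eq' (Finset.range (n + 1)) k
            (fun i => q ^ i * W n i * (i.factorial : ℝ))]
          rw [if_pos (Finset.mem_range.2 (by omega))]
  rw [hS]
  have hf : (k.factorial : ℝ) ≠ 0 := Nat.cast_ne_zero.2 k.factorial_ne_zero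
  field_simp
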